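/- The number ε_n of skew-symmetric (n,n)-clans in the largest sect satisfies ε_0 = 1, ε_1 = 2, and the recurrence ε_n = 2·ε_{n−1} + (n−1)·ε_{n−2} for all n ≥ 2. -/

import Mathlib

/-- A skew-symmetric `(n,n)`-clan, encoded (via the standard bijection with signed
involutions) as a pair `(σ, s)` where `σ` is an involution of the `2n` positions whose
2-cycles are the pairs of positions carrying matching natural numbers, and `s` records
the signs at the fixed points (`true` = `+`, `false` = `−`; `s` is normalized to `true`
on non-fixed points).  The conditions say: `σ` is an involution; `s` is normalized;
there are equally many `+`'s and `−`'s among the sign symbols; and the clan equals its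
reverse with all signs interchanged (`Fin.rev` is the reflection `i ↦ 2n+1−i`). -/
def IsSkewClan (n : ℕ) (σ : Equiv.Perm (Fin (2 * n))) (s : Fin (2 * n) → Bool) : Prop :=
  Function.Involutive σ ∧
  (∀ i, σ i ≠ i → s i = true) ∧
  (Finset.univ.filter (fun i => σ i = i ∧ s i = true)).card =
    (Finset.univ.filter (fun i => σ i = i ∧ s i = false)).card ∧
  (∀ i, σ (Fin.rev i) = Fin.rev (σ i)) ∧
  (∀ i, σ i = i → s (Fin.rev i) = !(s i))

/-- `Z_n`, the number of skew-symmetric `(n,n)`-clans. -/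
noncomputable def Znum (n : ℕ) : ℕ :=
  Nat.card {p : Equiv.Perm (Fin (2 * n)) × (Fin (2 * n) → Bool) // IsSkewClan n p.1 p.2}

/-- A skew-symmetric `(n,n)`-clan `(σ, s)` lies in the *largest sect* if every `−` sign
(`s i = false` at a fixed point) occupies a position in the first half, every `+` sign
occupies a position in the second half, and every pair of matching natural numbers has
one position in each half. -/
def IsLargestSectClan (n : ℕ) (σ : Equiv.Perm (Fin (2 * n))) (s : Fin (2 * n) → Bool) :
    Prop :=
  IsSkewClan n σ s ∧
  (∀ i : Fin (2 * n), σ i = i → (s i = false ↔ i.val < n)) ∧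
  (∀ i : Fin (2 * n), σ i ≠ i → (i.val < n ↔ ¬ (σ i).val < n))

/-- `ε_n`, the number of skew-symmetric `(n,n)`-clans in the largest sect. -/
noncomputable def epsnum (n : ℕ) : ℕ :=
  Nat.card {p : Equiv.Perm (Fin (2 * n)) × (Fin (2 * n) → Bool) //
    IsLargestSectClan n p.1 p.2}


open Equiv

def SInvP {α : Type} (τ : Equiv.Perm α) (f : α → Bool) : Prop :=
  Function.Involutive τ ∧ ∀ i, τ i ≠ i → f i = true

abbrev SType (α : Type) : Type := {p : Equiv.Perm α × (α → Bool) // SInvP p.1 p.2}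

noncomputable def anum (n : ℕ) : ℕ := Nat.card (SType (Fin n))

/-- transport along an equiv -/
def sTypeCongr {α β : Type} (e : α ≃ β) : SType α ≃ SType β where
  toFun p := ⟨⟨e.permCongr p.1.1, p.1.2 ∘ e.symm⟩, by
    obtain ⟨⟨τ, f⟩, h1, h2⟩ := p
    refine ⟨fun b => ?_, fun b hb => ?_⟩
    · simp [h1 (e.symm b)]
    · simp only [Function.comp_apply]
      apply h2
      intro hc
      apply hb
      simp [permCongr_apply, hc]⟩
  invFun p := ⟨⟨e.symm.permCongr p.1.1, p.1.2 ∘ e⟩, by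
    obtain ⟨⟨τ, f⟩, h1, h2⟩ := p
    refine ⟨fun b => ?_, fun b hb => ?_⟩
    · simp [h1 (e b)]
    · simp only [Function.comp_apply]
      apply h2
      intro hc
      apply hb
      simp [permCongr_apply, hc]⟩
  left_inv p := by
    apply Subtype.ext
    obtain ⟨⟨τ, f⟩, hp⟩ := p
    refine Prod.ext (Equiv.ext fun a => ?_) (funext fun a => ?_) <;>
      simp [permCongr_apply]
  right_inv p := by
    apply Subtype.ext
    obtain ⟨⟨τ, f⟩, hp⟩ := p
    refine Prod.ext (Equiv.ext fun a => ?_) (funext fun a => ?_) <;>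
      simp [permCongr_apply]

lemma anum_congr {α : Type} {n : ℕ} (e : α ≃ Fin n) : Nat.card (SType α) = anum n :=
  Nat.card_congr (sTypeCongr e)

section Fibers
variable {α : Type}

/-- restriction helper -/
def res (τ : Perm (Option α)) (b : α) : α :=
  match τ (some b) with
  | some c => c
  | none => b

lemma res_spec (τ : Perm (Option α)) (b : α) (h : τ (some b) ≠ none) :
    some (res τ b) = τ (some b) := by
  unfold res
  rcases hc : τ (some b) with _ | c
  · exact absurd hc h
  · simp [hc]

lemma res_ne_none (τ : Perm (Option α)) (hfix : τ none = none) (b : α) :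
    τ (some b) ≠ none := fun hc =>
  (Option.some_ne_none b) (τ.injective (hc.trans hfix.symm))

lemma some_res (τ : Perm (Option α)) (hfix : τ none = none) (b : α) :
    some (res τ b) = τ (some b) :=
  res_spec τ b (res_ne_none τ hfix b)

lemma res_invol (τ : Perm (Option α)) (hτ : Function.Involutive τ)
    (hfix : τ none = none) : Function.Involutive (res τ) := by
  intro b
  have h1 := some_res τ hfix b
  have h2 := some_res τ hfix (res τ b)
  rw [h1, hτ] at h2
  exact Option.some_injective _ h2

/-- Fiber of `SType (Option α)` over `none`. -/
def fiberNoneEquiv : {p : SType (Option α) // p.1.1 none = none} ≃ Bool × SType α where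
  toFun p := ⟨p.1.1.2 none,
    ⟨⟨Function.Involutive.toPerm (res p.1.1.1)
        (res_invol p.1.1.1 p.1.2.1 p.2), fun b => p.1.1.2 (some b)⟩, by
      obtain ⟨⟨⟨τ, f⟩, h1, h2⟩, hfix⟩ := p
      refine ⟨res_invol τ h1 hfix, fun b hb => ?_⟩
      simp only [Function.Involutive.coe_toPerm] at hb
      apply h2
      intro hc
      apply hb
      apply Option.some_injective
      rw [some_res τ hfix b, hc]⟩⟩
  invFun q := ⟨⟨⟨q.2.1.1.optionCongr, fun o => o.elim q.1 q.2.1.2⟩, by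
      obtain ⟨b, ⟨⟨τ, f⟩, h1, h2⟩⟩ := q
      constructor
      · intro o
        rcases o with _ | c
        · simp
        · simp [h1 c]
      · intro o ho
        rcases o with _ | c
        · simp at ho
        · simp only [optionCongr_apply, Option.map_some, ne_eq, Option.some.injEq] at ho
          exact h2 c ho⟩, by simp⟩
  left_inv p := by
    apply Subtype.ext
    apply Subtype.ext
    obtain ⟨⟨⟨τ, f⟩, h1, h2⟩, hfix⟩ := p
    refine Prod.ext (Equiv.ext fun o => ?_) (funext fun o => ?_)
    · rcases o with _ | b
      · simpa using hfix.symm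
      · simp only [optionCongr_apply, Option.map_some, Function.Involutive.coe_toPerm]
        exact some_res τ hfix b
    · rcases o with _ | b <;> rfl
  right_inv q := by
    obtain ⟨b, ⟨⟨τ, f⟩, h1, h2⟩⟩ := q
    refine Prod.ext rfl (Subtype.ext (Prod.ext (Equiv.ext fun a => ?_) rfl))
    have : some (res τ.optionCongr a) = τ.optionCongr (some a) :=
      some_res _ (by simp) a
    simp only [optionCongr_apply, Option.map_some] at this
    simpa [Function.Involutive.coe_toPerm] using Option.some_injective _ this

section FiberSome
variable {α : Type} [DecidableEq α] (a₀ : α)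

lemma tau_some_a0 (τ : Perm (Option α)) (hτ : Function.Involutive τ)
    (hfix : τ none = some a₀) : τ (some a₀) = none := by
  have := hτ none
  rwa [hfix] at this

lemma res_ne_none' (τ : Perm (Option α)) (hτ : Function.Involutive τ)
    (hfix : τ none = some a₀) {b : α} (hb : b ≠ a₀) : τ (some b) ≠ none := by
  intro hc
  rw [← tau_some_a0 a₀ τ hτ hfix] at hc
  exact hb (Option.some_injective _ (τ.injective hc))

lemma some_res' (τ : Perm (Option α)) (hτ : Function.Involutive τ)
    (hfix : τ none = some a₀) {b : α} (hb : b ≠ a₀) :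
    some (res τ b) = τ (some b) :=
  res_spec τ b (res_ne_none' a₀ τ hτ hfix hb)

lemma res_ne_a0 (τ : Perm (Option α)) (hτ : Function.Involutive τ)
    (hfix : τ none = some a₀) {b : α} (hb : b ≠ a₀) : res τ b ≠ a₀ := by
  intro hc
  have h1 := some_res' a₀ τ hτ hfix hb
  rw [hc, ← hfix] at h1
  exact (Option.some_ne_none b) (τ.injective h1.symm)

/-- restricted involution on the subtype -/
def resSub (τ : Perm (Option α)) (hτ : Function.Involutive τ)
    (hfix : τ none = some a₀) : {b : α // b ≠ a₀} → {b : α // b ≠ a₀} :=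
  fun b => ⟨res τ b.1, res_ne_a0 a₀ τ hτ hfix b.2⟩

lemma resSub_invol (τ : Perm (Option α)) (hτ : Function.Involutive τ)
    (hfix : τ none = some a₀) : Function.Involutive (resSub a₀ τ hτ hfix) := by
  rintro ⟨b, hb⟩
  apply Subtype.ext
  have h1 := some_res' a₀ τ hτ hfix hb
  have h2 := some_res' a₀ τ hτ hfix (res_ne_a0 a₀ τ hτ hfix hb)
  rw [h1, hτ] at h2
  exact Option.some_injective _ h2

/-- extension function -/
def extFun (τ' : Perm {b : α // b ≠ a₀}) : Option α → Option α :=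
  fun o => o.elim (some a₀) (fun b => if h : b = a₀ then none else some (τ' ⟨b, h⟩).1)

lemma extFun_invol (τ' : Perm {b : α // b ≠ a₀}) (hτ' : Function.Involutive τ') :
    Function.Involutive (extFun a₀ τ') := by
  rintro (_ | b)
  · simp [extFun]
  · by_cases h : b = a₀
    · simp [extFun, h]
    · have hne := (τ' ⟨b, h⟩).2
      simp only [extFun, Option.elim_some, dif_neg h, Option.elim_some, dif_neg hne]
      rw [show (⟨(τ' ⟨b, h⟩).1, hne⟩ : {b : α // b ≠ a₀}) = τ' ⟨b, h⟩ from rfl, hτ']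

/-- Fiber of `SType (Option α)` over `some a₀`. -/
def fiberSomeEquiv :
    {p : SType (Option α) // p.1.1 none = some a₀} ≃ SType {b : α // b ≠ a₀} where
  toFun p := ⟨⟨Function.Involutive.toPerm (resSub a₀ p.1.1.1 p.1.2.1 p.2)
      (resSub_invol a₀ p.1.1.1 p.1.2.1 p.2), fun b => p.1.1.2 (some b.1)⟩, by
    obtain ⟨⟨⟨τ, f⟩, h1, h2⟩, hfix⟩ := p
    refine ⟨resSub_invol a₀ τ h1 hfix, ?_⟩
    rintro ⟨b, hb⟩ hne
    apply h2
    intro hc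
    apply hne
    simp only [Function.Involutive.coe_toPerm]
    apply Subtype.ext
    apply Option.some_injective
    simp only [resSub]
    rw [some_res' a₀ τ h1 hfix hb, hc]⟩
  invFun q := ⟨⟨⟨Function.Involutive.toPerm (extFun a₀ q.1.1) (extFun_invol a₀ q.1.1 q.2.1),
      fun o => o.elim true (fun b => if h : b = a₀ then true else q.1.2 ⟨b, h⟩)⟩, by
    obtain ⟨⟨τ', f'⟩, h1, h2⟩ := q
    constructor
    · exact extFun_invol a₀ τ' h1
    · rintro (_ | b) hne
      · rfl
      · simp only [Option.elim_some]
        by_cases h : b = a₀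
        · simp [h]
        · rw [dif_neg h]
          apply h2
          intro hc
          apply hne
          simp only [Function.Involutive.coe_toPerm, extFun, Option.elim_some, dif_neg h, hc]⟩,
    by simp [Function.Involutive.coe_toPerm, extFun]⟩
  left_inv p := by
    apply Subtype.ext
    apply Subtype.ext
    obtain ⟨⟨⟨τ, f⟩, h1, h2⟩, hfix⟩ := p
    refine Prod.ext (Equiv.ext fun o => ?_) (funext fun o => ?_)
    · rcases o with _ | b
      · simpa [Function.Involutive.coe_toPerm, extFun] using hfix.symm
      · simp only [Function.Involutive.coe_toPerm, extFun, Option.elim_some]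
        by_cases h : b = a₀
        · subst h
          rw [dif_pos rfl]
          exact (tau_some_a0 _ τ h1 hfix).symm
        · rw [dif_neg h]
          exact some_res' a₀ τ h1 hfix h
    · rcases o with _ | b
      · exact (h2 none (by rw [hfix]; exact fun hc => by cases hc)).symm
      · simp only [Option.elim_some]
        by_cases h : b = a₀
        · subst h
          rw [dif_pos rfl]
          refine (h2 (some b) ?_).symm
          rw [tau_some_a0 _ τ h1 hfix]
          exact fun hc => by cases hc
        · rw [dif_neg h]
  right_inv q := by
    apply Subtype.ext
    obtain ⟨⟨τ', f'⟩, h1, h2⟩ := q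
    refine Prod.ext (Equiv.ext fun b => ?_) (funext fun b => ?_)
    · apply Subtype.ext
      simp only [Function.Involutive.coe_toPerm, resSub]
      apply Option.some_injective
      rw [some_res' a₀ _ (extFun_invol a₀ τ' h1) (by simp [Function.Involutive.coe_toPerm, extFun]) b.2]
      simp only [Function.Involutive.coe_toPerm, extFun, Option.elim_some, dif_neg b.2]
    · simp only [Option.elim_some, dif_neg b.2]
end FiberSome
end Fibers

lemma natcard_sigma {ι : Type} [Fintype ι] (g : ι → Type) [∀ i, Finite (g i)] :
    Nat.card ((i : ι) × g i) = ∑ i, Nat.card (g i) := by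
  classical
  letI : ∀ i, Fintype (g i) := fun i => Fintype.ofFinite _
  simp [Nat.card_eq_fintype_card, Fintype.card_sigma]

lemma card_SType_option {α : Type} [Fintype α] [DecidableEq α] :
    Nat.card (SType (Option α)) =
      2 * Nat.card (SType α) + ∑ a : α, Nat.card (SType {b : α // b ≠ a}) := by
  have h1 : Nat.card (SType (Option α)) =
      Nat.card ((x : Option α) × {p : SType (Option α) // p.1.1 none = x}) :=
    (Nat.card_congr (Equiv.sigmaFiberEquiv (fun p : SType (Option α) => p.1.1 none))).symm
  rw [h1, natcard_sigma, Fintype.sum_option]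
  congr 1
  · rw [Nat.card_congr (fiberNoneEquiv (α := α)), Nat.card_prod]
    simp [Nat.card_eq_fintype_card]
  · exact Finset.sum_congr rfl fun a _ => Nat.card_congr (fiberSomeEquiv a)

lemma anum_zero : anum 0 = 1 := by
  rw [anum, Nat.card_eq_one_iff_unique]
  constructor
  · constructor
    intro p q
    apply Subtype.ext
    refine Prod.ext (Equiv.ext fun i => i.elim0) (funext fun i => i.elim0)
  · exact ⟨⟨(1, fun _ => true), fun i => i.elim0, fun i => i.elim0⟩⟩

def sTypeOneEquiv : SType (Fin 1) ≃ Bool where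
  toFun p := p.1.2 0
  invFun b := ⟨(1, fun _ => b), fun i => rfl, fun i hi => absurd (Subsingleton.elim _ _) hi⟩
  left_inv p := by
    apply Subtype.ext
    refine Prod.ext (Equiv.ext fun i => Subsingleton.elim _ _)
      (funext fun i => by rw [Subsingleton.elim (0 : Fin 1) i])
  right_inv b := rfl

lemma anum_one : anum 1 = 2 := by
  rw [anum, Nat.card_congr sTypeOneEquiv, Nat.card_eq_fintype_card, Fintype.card_bool]

lemma anum_rec (n : ℕ) : anum (n + 2) = 2 * anum (n + 1) + (n + 1) * anum n := by
  have h1 : anum (n + 2) = Nat.card (SType (Option (Fin (n + 1)))) :=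
    Nat.card_congr (sTypeCongr (finSuccEquiv (n + 1)))
  rw [h1, card_SType_option]
  have h2 : ∀ a : Fin (n + 1), Nat.card (SType {b : Fin (n + 1) // b ≠ a}) = anum n :=
    fun a => anum_congr (finSuccAboveEquiv a).symm
  rw [Finset.sum_congr rfl (fun a _ => h2 a), Finset.sum_const, Finset.card_univ,
    Fintype.card_fin, smul_eq_mul]
  rfl

section Clan2

variable {n : ℕ}

def emb (n : ℕ) (i : Fin n) : Fin (2 * n) := ⟨i.1, by omega⟩

def lo (j : Fin (2 * n)) (h : j.1 < n) : Fin n := ⟨j.1, h⟩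

def half (j : Fin (2 * n)) (h : ¬ j.1 < n) : Fin n := ⟨2 * n - 1 - j.1, by have := j.2; omega⟩

@[simp] lemma emb_val (i : Fin n) : (emb n i).1 = i.1 := rfl
@[simp] lemma lo_val (j : Fin (2 * n)) (h : j.1 < n) : (lo j h).1 = j.1 := rfl
@[simp] lemma half_val (j : Fin (2 * n)) (h : ¬ j.1 < n) : (half j h).1 = 2 * n - 1 - j.1 := rfl

def bwdFun (n : ℕ) (τ : Perm (Fin n)) (f : Fin n → Bool) (j : Fin (2 * n)) : Fin (2 * n) :=
  if h : j.1 < n then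
    (if f (lo j h) = true then Fin.rev (emb n (τ (lo j h))) else j)
  else
    (if f (half j h) = true then emb n (τ (half j h)) else j)

variable (τ : Perm (Fin n)) (f : Fin n → Bool)

lemma bwd_lo_pos (j : Fin (2 * n)) (h : j.1 < n) (hb : f (lo j h) = true) :
    bwdFun n τ f j = Fin.rev (emb n (τ (lo j h))) := by
  rw [bwdFun, dif_pos h, if_pos hb]

lemma bwd_lo_neg (j : Fin (2 * n)) (h : j.1 < n) (hb : ¬ f (lo j h) = true) :
    bwdFun n τ f j = j := by
  rw [bwdFun, dif_pos h, if_neg hb]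

lemma bwd_hi_pos (j : Fin (2 * n)) (h : ¬ j.1 < n) (hb : f (half j h) = true) :
    bwdFun n τ f j = emb n (τ (half j h)) := by
  rw [bwdFun, dif_neg h, if_pos hb]

lemma bwd_hi_neg (j : Fin (2 * n)) (h : ¬ j.1 < n) (hb : ¬ f (half j h) = true) :
    bwdFun n τ f j = j := by
  rw [bwdFun, dif_neg h, if_neg hb]

lemma f_tau (hτ : Function.Involutive τ) (hf : ∀ i, τ i ≠ i → f i = true)
    (i : Fin n) (hi : f i = true) : f (τ i) = true := by
  by_cases h : τ i = i
  · rwa [h]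
  · refine hf (τ i) fun hc => h ?_
    have := hτ i
    rw [hc] at this
    exact this.symm ▸ rfl

lemma rev_emb_val (i : Fin n) : (Fin.rev (emb n i)).1 = 2 * n - 1 - i.1 := by
  rw [Fin.val_rev]
  simp only [emb_val]
  omega

lemma rev_emb_hi (i : Fin n) : ¬ (Fin.rev (emb n i)).1 < n := by
  rw [rev_emb_val]
  have := i.2
  omega

lemma half_rev_emb (i : Fin n) (h : ¬ (Fin.rev (emb n i)).1 < n) :
    half (Fin.rev (emb n i)) h = i := by
  apply Fin.ext
  rw [half_val, rev_emb_val]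
  have := i.2
  omega

lemma bwd_invol (hτ : Function.Involutive τ) (hf : ∀ i, τ i ≠ i → f i = true) : Function.Involutive (bwdFun n τ f) := by
  intro j
  by_cases h : j.1 < n
  · by_cases hb : f (lo j h) = true
    · rw [bwd_lo_pos τ f j h hb]
      have hk := rev_emb_hi (τ (lo j h))
      rw [bwd_hi_pos τ f _ hk (by rw [half_rev_emb]; exact f_tau τ f hτ hf _ hb),
        half_rev_emb, hτ]
      apply Fin.ext
      simp [lo]
    · rw [bwd_lo_neg τ f j h hb, bwd_lo_neg τ f j h hb]
  · by_cases hb : f (half j h) = true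
    · rw [bwd_hi_pos τ f j h hb]
      have hk : (emb n (τ (half j h))).1 < n := (τ (half j h)).2
      rw [bwd_lo_pos τ f _ hk (by
        have : lo (emb n (τ (half j h))) hk = τ (half j h) := Fin.ext rfl
        rw [this]; exact f_tau τ f hτ hf _ hb)]
      have : lo (emb n (τ (half j h))) hk = τ (half j h) := Fin.ext rfl
      rw [this, hτ]
      apply Fin.ext
      rw [rev_emb_val, half_val]
      have := j.2
      omega
    · rw [bwd_hi_neg τ f j h hb, bwd_hi_neg τ f j h hb]


lemma bwd_fix_lo (j : Fin (2 * n)) (h : j.1 < n) :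
    bwdFun n τ f j = j ↔ f (lo j h) = false := by
  by_cases hb : f (lo j h) = true
  · rw [bwd_lo_pos τ f j h hb]
    constructor
    · intro hc
      exfalso
      have := rev_emb_hi (τ (lo j h))
      rw [hc] at this
      exact this h
    · intro hc
      rw [hb] at hc
      exact absurd hc (by simp)
  · simp only [Bool.not_eq_true] at hb
    simp [bwd_lo_neg τ f j h (by simp [hb]), hb]

lemma bwd_fix_hi (j : Fin (2 * n)) (h : ¬ j.1 < n) :
    bwdFun n τ f j = j ↔ f (half j h) = false := by
  by_cases hb : f (half j h) = true
  · rw [bwd_hi_pos τ f j h hb]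
    constructor
    · intro hc
      exfalso
      have : (emb n (τ (half j h))).1 < n := (τ (half j h)).2
      rw [hc] at this
      exact h this
    · intro hc
      rw [hb] at hc
      exact absurd hc (by simp)
  · simp only [Bool.not_eq_true] at hb
    simp [bwd_hi_neg τ f j h (by simp [hb]), hb]

lemma rev_lt (j : Fin (2 * n)) : (Fin.rev j).1 < n ↔ ¬ j.1 < n := by
  rw [Fin.val_rev]
  have := j.2
  omega

lemma bwd_rev_comm (j : Fin (2 * n)) :
    bwdFun n τ f (Fin.rev j) = Fin.rev (bwdFun n τ f j) := by
  by_cases h : j.1 < n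
  · have hr : ¬ (Fin.rev j).1 < n := by rw [rev_lt]; simp [h]
    have hhalf : half (Fin.rev j) hr = lo j h := by
      apply Fin.ext
      rw [half_val, lo_val, Fin.val_rev]
      have := j.2
      omega
    by_cases hb : f (lo j h) = true
    · rw [bwd_lo_pos τ f j h hb, bwd_hi_pos τ f _ hr (by rw [hhalf]; exact hb), hhalf,
        Fin.rev_rev]
    · rw [bwd_lo_neg τ f j h hb, bwd_hi_neg τ f _ hr (by rw [hhalf]; exact hb)]
  · have hr : (Fin.rev j).1 < n := (rev_lt j).2 h
    have hlo : lo (Fin.rev j) hr = half j h := by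
      apply Fin.ext
      rw [half_val, lo_val, Fin.val_rev]
      omega
    by_cases hb : f (half j h) = true
    · rw [bwd_hi_pos τ f j h hb, bwd_lo_pos τ f _ hr (by rw [hlo]; exact hb), hlo]
    · rw [bwd_hi_neg τ f j h hb, bwd_lo_neg τ f _ hr (by rw [hlo]; exact hb)]

def bwdS (n : ℕ) (f : Fin n → Bool) (j : Fin (2 * n)) : Bool :=
  if h : j.1 < n then f (lo j h) else true

lemma bwd_flip (j : Fin (2 * n)) (hj : bwdFun n τ f j = j) :
    bwdS n f (Fin.rev j) = !(bwdS n f j) := by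
  by_cases h : j.1 < n
  · have hfix := (bwd_fix_lo τ f j h).1 hj
    have hr : ¬ (Fin.rev j).1 < n := by rw [rev_lt]; simp [h]
    rw [bwdS, dif_neg hr, bwdS, dif_pos h, hfix]
    rfl
  · have hfix := (bwd_fix_hi τ f j h).1 hj
    have hr : (Fin.rev j).1 < n := (rev_lt j).2 h
    have hlo : lo (Fin.rev j) hr = half j h := by
      apply Fin.ext
      rw [half_val, lo_val, Fin.val_rev]
      omega
    rw [bwdS, dif_pos hr, bwdS, dif_neg h, hlo, hfix]
    rfl

lemma bwd_norm (j : Fin (2 * n)) (hj : bwdFun n τ f j ≠ j) : bwdS n f j = true := by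
  by_cases h : j.1 < n
  · rw [bwdS, dif_pos h]
    by_contra hb
    simp only [Bool.not_eq_true] at hb
    exact hj ((bwd_fix_lo τ f j h).2 hb)
  · rw [bwdS, dif_neg h]

lemma bwd_sect (j : Fin (2 * n)) (hj : bwdFun n τ f j = j) :
    bwdS n f j = false ↔ j.1 < n := by
  by_cases h : j.1 < n
  · simp only [h, iff_true]
    rw [bwdS, dif_pos h]
    exact (bwd_fix_lo τ f j h).1 hj
  · simp only [h, iff_false]
    rw [bwdS, dif_neg h]
    simp

lemma bwd_cross (j : Fin (2 * n)) (hj : bwdFun n τ f j ≠ j) :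
    j.1 < n ↔ ¬ (bwdFun n τ f j).1 < n := by
  by_cases h : j.1 < n
  · simp only [h, true_iff]
    have hb : f (lo j h) = true := by
      by_contra hb
      simp only [Bool.not_eq_true] at hb
      exact hj ((bwd_fix_lo τ f j h).2 hb)
    rw [bwd_lo_pos τ f j h hb]
    exact rev_emb_hi _
  · simp only [h, false_iff, not_not]
    have hb : f (half j h) = true := by
      by_contra hb
      simp only [Bool.not_eq_true] at hb
      exact hj ((bwd_fix_hi τ f j h).2 hb)
    rw [bwd_hi_pos τ f j h hb]
    exact (τ (half j h)).2

lemma card_balance (σ : Perm (Fin (2 * n))) (s : Fin (2 * n) → Bool)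
    (hrev : ∀ i, σ (Fin.rev i) = Fin.rev (σ i))
    (hflip : ∀ i, σ i = i → s (Fin.rev i) = !(s i)) :
    (Finset.univ.filter (fun i => σ i = i ∧ s i = true)).card =
      (Finset.univ.filter (fun i => σ i = i ∧ s i = false)).card := by
  apply Finset.card_nbij' (i := fun j => Fin.rev j) (j := fun j => Fin.rev j)
  · intro a ha
    simp only [Finset.mem_coe, Finset.mem_filter, Finset.mem_univ, true_and] at ha ⊢
    refine ⟨by rw [hrev, ha.1], ?_⟩
    rw [hflip a ha.1, ha.2]
    rfl
  · intro a ha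
    simp only [Finset.mem_coe, Finset.mem_filter, Finset.mem_univ, true_and] at ha ⊢
    refine ⟨by rw [hrev, ha.1], ?_⟩
    rw [hflip a ha.1, ha.2]
    rfl
  · intro a _
    exact Fin.rev_rev a
  · intro a _
    exact Fin.rev_rev a


def fwdFun (n : ℕ) (σ : Perm (Fin (2 * n))) (i : Fin n) : Fin n :=
  if h : (σ (emb n i)).1 < n then lo (σ (emb n i)) h else half (σ (emb n i)) h

variable (σ : Perm (Fin (2 * n))) (s : Fin (2 * n) → Bool)

lemma fwd_fixlo (hc : IsLargestSectClan n σ s) (i : Fin n)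
    (h : (σ (emb n i)).1 < n) : σ (emb n i) = emb n i := by
  by_contra hcne
  exact ((hc.2.2 _ hcne).1 i.2) h

lemma emb_lo (j : Fin (2 * n)) (h : j.1 < n) : emb n (lo j h) = j := Fin.ext rfl

lemma emb_half (j : Fin (2 * n)) (h : ¬ j.1 < n) : emb n (half j h) = Fin.rev j := by
  apply Fin.ext
  rw [emb_val, half_val, Fin.val_rev]
  omega

lemma fwd_invol (hc : IsLargestSectClan n σ s) : Function.Involutive (fwdFun n σ) := by
  intro i
  by_cases h : (σ (emb n i)).1 < n
  · have hfix := fwd_fixlo σ s hc i h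
    have e1 : fwdFun n σ i = i := by
      rw [fwdFun, dif_pos h]
      apply Fin.ext
      rw [lo_val, hfix, emb_val]
    rw [e1, e1]
  · have e1 : fwdFun n σ i = half (σ (emb n i)) h := by rw [fwdFun, dif_neg h]
    rw [e1]
    have e2 : emb n (half (σ (emb n i)) h) = Fin.rev (σ (emb n i)) := emb_half _ h
    have e3 : σ (emb n (half (σ (emb n i)) h)) = Fin.rev (emb n i) := by
      rw [e2, hc.1.2.2.2.1, hc.1.1]
    have h4 : ¬ (σ (emb n (half (σ (emb n i)) h))).1 < n := by
      rw [e3, Fin.val_rev, emb_val]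
      have := i.2
      omega
    rw [fwdFun, dif_neg h4]
    apply Fin.ext
    rw [half_val, e3, Fin.val_rev, emb_val]
    have := i.2
    omega

lemma fwd_norm (hc : IsLargestSectClan n σ s) (i : Fin n) (hi : fwdFun n σ i ≠ i) :
    s (emb n i) = true := by
  apply hc.1.2.1
  intro hcne
  apply hi
  have h : (σ (emb n i)).1 < n := by rw [hcne]; exact i.2
  rw [fwdFun, dif_pos h]
  apply Fin.ext
  rw [lo_val, hcne, emb_val]


def clanEquiv (n : ℕ) :
    {p : Perm (Fin (2 * n)) × (Fin (2 * n) → Bool) // IsLargestSectClan n p.1 p.2} ≃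
      SType (Fin n) where
  toFun p := ⟨⟨Function.Involutive.toPerm (fwdFun n p.1.1) (fwd_invol p.1.1 p.1.2 p.2),
      fun i => p.1.2 (emb n i)⟩, by
    obtain ⟨⟨σ, s⟩, hc⟩ := p
    refine ⟨fwd_invol σ s hc, fun i hi => fwd_norm σ s hc i ?_⟩
    simpa [Function.Involutive.coe_toPerm] using hi⟩
  invFun q := ⟨⟨Function.Involutive.toPerm (bwdFun n q.1.1 q.1.2)
      (bwd_invol q.1.1 q.1.2 q.2.1 q.2.2), bwdS n q.1.2⟩, by
    obtain ⟨⟨τ, f⟩, hτ, hf⟩ := q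
    refine ⟨⟨bwd_invol τ f hτ hf, ?_, ?_, ?_, ?_⟩, ?_, ?_⟩
    · intro j hj
      apply bwd_norm τ f j
      simpa [Function.Involutive.coe_toPerm] using hj
    · apply card_balance
      · intro j
        simp only [Function.Involutive.coe_toPerm]
        exact bwd_rev_comm τ f j
      · intro j hj
        apply bwd_flip τ f j
        simpa [Function.Involutive.coe_toPerm] using hj
    · intro j
      simp only [Function.Involutive.coe_toPerm]
      exact bwd_rev_comm τ f j
    · intro j hj
      apply bwd_flip τ f j
      simpa [Function.Involutive.coe_toPerm] using hj
    · intro j hj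
      apply bwd_sect τ f j
      simpa [Function.Involutive.coe_toPerm] using hj
    · intro j hj
      have hj' : bwdFun n τ f j ≠ j := by
        simpa [Function.Involutive.coe_toPerm] using hj
      simpa [Function.Involutive.coe_toPerm] using bwd_cross τ f j hj'⟩
  left_inv p := by
    apply Subtype.ext
    obtain ⟨⟨σ, s⟩, hc⟩ := p
    obtain ⟨⟨hinv, hnorm, hcard, hrev, hflip⟩, hsect, hcross⟩ := hc
    dsimp only at hinv hnorm hcard hrev hflip hsect hcross
    have hc : IsLargestSectClan n σ s := ⟨⟨hinv, hnorm, hcard, hrev, hflip⟩, hsect, hcross⟩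
    refine Prod.ext (Equiv.ext fun j => ?_) (funext fun j => ?_)
    · simp only [Function.Involutive.coe_toPerm]
      by_cases h : j.1 < n
      · have hs : s (emb n (lo j h)) = s j := by rw [emb_lo]
        by_cases hb : s j = true
        · have hne : σ j ≠ j := by
            intro hcne
            have := (hsect j hcne).2 h
            rw [hb] at this
            exact Bool.noConfusion this
          rw [bwd_lo_pos _ _ j h (by rw [hs]; exact hb)]
          have hcr : ¬ (σ j).1 < n := (hcross j hne).1 h
          have : Function.Involutive.toPerm (fwdFun n σ) (fwd_invol σ s hc) (lo j h) =
              half (σ j) hcr := by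
            simp only [Function.Involutive.coe_toPerm]
            rw [fwdFun]
            rw [emb_lo]
            rw [dif_neg hcr]
          rw [this]
          apply Fin.ext
          rw [rev_emb_val, half_val]
          have := (σ j).2
          omega
        · simp only [Bool.not_eq_true] at hb
          have hfix : σ j = j := by
            by_contra hne
            rw [hnorm j hne] at hb
            exact Bool.noConfusion hb
          rw [bwd_lo_neg _ _ j h (by rw [hs, hb]; simp), hfix]
      · have hs : s (emb n (half j h)) = s (Fin.rev j) := by rw [emb_half]
        by_cases hb : s (Fin.rev j) = true
        · have hrn : (Fin.rev j).1 < n := (rev_lt j).2 h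
          have hne : σ (Fin.rev j) ≠ Fin.rev j := by
            intro hcne
            have := (hsect _ hcne).2 hrn
            rw [hb] at this
            exact Bool.noConfusion this
          rw [bwd_hi_pos _ _ j h (by rw [hs]; exact hb)]
          have hcr : ¬ (σ (Fin.rev j)).1 < n := (hcross _ hne).1 hrn
          have : Function.Involutive.toPerm (fwdFun n σ) (fwd_invol σ s hc) (half j h) =
              half (σ (Fin.rev j)) hcr := by
            simp only [Function.Involutive.coe_toPerm]
            rw [fwdFun, emb_half, dif_neg hcr]
          rw [this]
          apply Fin.ext
          rw [emb_val, half_val, hrev, Fin.val_rev]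
          have := (σ j).2
          omega
        · simp only [Bool.not_eq_true] at hb
          have hfixr : σ (Fin.rev j) = Fin.rev j := by
            by_contra hne
            rw [hnorm _ hne] at hb
            exact Bool.noConfusion hb
          have hfix : σ j = j := by
            have := hrev (Fin.rev j)
            rw [Fin.rev_rev, hfixr, Fin.rev_rev] at this
            exact this
          rw [bwd_hi_neg _ _ j h (by rw [hs, hb]; simp), hfix]
    · show bwdS n (fun i => s (emb n i)) j = s j
      by_cases h : j.1 < n
      · rw [bwdS, dif_pos h]
        show s (emb n (lo j h)) = s j
        rw [emb_lo]
      · rw [bwdS, dif_neg h]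
        by_cases hfix : σ j = j
        · symm
          by_contra hb
          simp only [Bool.not_eq_true] at hb
          exact h ((hsect j hfix).1 hb)
        · exact (hnorm j hfix).symm
  right_inv q := by
    apply Subtype.ext
    obtain ⟨⟨τ, f⟩, hτ, hf⟩ := q
    dsimp only at hτ hf
    refine Prod.ext (Equiv.ext fun i => ?_) (funext fun i => ?_)
    · simp only [Function.Involutive.coe_toPerm]
      have hemb : (emb n i).1 < n := i.2
      have hlo : lo (emb n i) hemb = i := Fin.ext rfl
      by_cases hb : f i = true
      · have e1 : Function.Involutive.toPerm (bwdFun n τ f) (bwd_invol τ f hτ hf)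
            (emb n i) = Fin.rev (emb n (τ i)) := by
          simp only [Function.Involutive.coe_toPerm]
          rw [bwd_lo_pos τ f _ hemb (by rw [hlo]; exact hb), hlo]
        rw [fwdFun, e1]
        have hk := rev_emb_hi (τ i)
        rw [dif_neg hk]
        exact half_rev_emb (τ i) hk
      · simp only [Bool.not_eq_true] at hb
        have hfix : τ i = i := by
          by_contra hne
          rw [hf i hne] at hb
          exact Bool.noConfusion hb
        have e1 : Function.Involutive.toPerm (bwdFun n τ f) (bwd_invol τ f hτ hf)
            (emb n i) = emb n i := by
          simp only [Function.Involutive.coe_toPerm]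
          rw [bwd_lo_neg τ f _ hemb (by rw [hlo, hb]; simp)]
        rw [fwdFun, e1, dif_pos hemb, hlo, hfix]
    · show bwdS n f (emb n i) = f i
      have hemb : (emb n i).1 < n := i.2
      rw [bwdS, dif_pos hemb]
      rfl

end Clan2

lemma epsnum_eq_anum (n : ℕ) : epsnum n = anum n :=
  Nat.card_congr (clanEquiv n)

/-- `ε_0 = 1`, `ε_1 = 2`, and `ε_n = 2·ε_{n−1} + (n−1)·ε_{n−2}` for `n ≥ 2`. -/
theorem stmt14 :
    epsnum 0 = 1 ∧ epsnum 1 = 2 ∧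
    ∀ n : ℕ, 2 ≤ n → epsnum n = 2 * epsnum (n - 1) + (n - 1) * epsnum (n - 2) := by
  refine ⟨by rw [epsnum_eq_anum, anum_zero], by rw [epsnum_eq_anum, anum_one], ?_⟩
  intro n hn
  obtain ⟨m, rfl⟩ : ∃ m, n = m + 2 := ⟨n - 2, by omega⟩
  have h1 : m + 2 - 1 = m + 1 := by omega
  have h2 : m + 2 - 2 = m := by omega
  rw [h1, h2, epsnum_eq_anum, epsnum_eq_anum, epsnum_eq_anum, anum_rec]
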